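/- Let A be the backward shift on the complex space X. Then for λ ∈ ℂ, λ is an eigenvalue of A if and only if |λ| < 1 or λ = 1; that is, σ_p(A) = {λ : |λ| < 1} ∪ {1}. -/

import Mathlib

open Filter Topology

/-- Membership in the complex space `X` (0-based: `x k` is the paper's
`x_{k+1}`). -/
def MemXC (x : ℕ → ℂ) : Prop :=
  Summable (fun k : ℕ => ‖x (k + 1) / ((k : ℂ) + 2) - x k / ((k : ℂ) + 1)‖) ∧
  Tendsto (fun k : ℕ => x k / ((k : ℂ) + 1)) atTop (𝓝 0)

lemma norm_cast_add_one (k : ℕ) : ‖((k : ℂ) + 1)‖ = (k : ℝ) + 1 := by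
  have h : ((k : ℂ) + 1) = (((k : ℝ) + 1 : ℝ) : ℂ) := by push_cast; ring
  rw [h, Complex.norm_real, Real.norm_eq_abs, abs_of_nonneg (by positivity)]

lemma norm_cast_add_two (k : ℕ) : ‖((k : ℂ) + 2)‖ = (k : ℝ) + 2 := by
  have h : ((k : ℂ) + 2) = (((k : ℝ) + 2 : ℝ) : ℂ) := by push_cast; ring
  rw [h, Complex.norm_real, Real.norm_eq_abs, abs_of_nonneg (by positivity)]

lemma summable_one_div_sq : Summable (fun k : ℕ => 1 / ((k : ℝ) + 1) ^ 2) := by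
  have h : Summable (fun n : ℕ => 1 / (n : ℝ) ^ 2) :=
    Real.summable_one_div_nat_pow.mpr one_lt_two
  have := (summable_nat_add_iff (f := fun n : ℕ => 1 / (n : ℝ) ^ 2) 1).mpr h
  convert this using 2 with k
  · rfl
  · push_cast; ring

lemma not_summable_shift : ¬ Summable (fun k : ℕ => 1 / ((k : ℝ) + 2)) := by
  intro h
  have h2 : Summable (fun n : ℕ => 1 / ((n + 2 : ℕ) : ℝ)) := by
    convert h using 2 with k; push_cast; ring
  exact Real.not_summable_one_div_natCast
    ((summable_nat_add_iff (f := fun n : ℕ => 1 / (n : ℝ)) 2).mp h2)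

/-- The point spectrum of the backward shift `A x = (x_{k+1})` on the complex
space `X` is `{λ : |λ| < 1} ∪ {1}`: `λ` is an eigenvalue of `A` iff
`|λ| < 1` or `λ = 1`. -/
theorem stmt_16 (l : ℂ) :
    (∃ x : ℕ → ℂ, MemXC x ∧ x ≠ 0 ∧ ∀ k : ℕ, x (k + 1) = l * x k) ↔
      (‖l‖ < 1 ∨ l = 1) := by
  constructor
  · rintro ⟨x, ⟨hsum, _⟩, hne, hrec⟩
    by_contra hcon
    push_neg at hcon
    obtain ⟨hl1, hlne⟩ := hcon
    have hl : 1 ≤ ‖l‖ := hl1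
    -- closed form
    have hgeom : ∀ k, x k = x 0 * l ^ k := by
      intro k
      induction k with
      | zero => simp
      | succ n ih => rw [hrec n, ih]; ring
    have hx0 : x 0 ≠ 0 := by
      intro h0
      apply hne
      funext k
      rw [hgeom k, h0, zero_mul]; rfl
    have hc : ‖x 0‖ * ‖l - 1‖ ≠ 0 :=
      mul_ne_zero (norm_ne_zero_iff.mpr hx0)
        (norm_ne_zero_iff.mpr (sub_ne_zero.mpr hlne))
    -- key pointwise inequality
    have key : ∀ k : ℕ, ‖x 0‖ * ‖l - 1‖ * (1 / ((k : ℝ) + 2)) ≤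
        ‖x (k + 1) / ((k : ℂ) + 2) - x k / ((k : ℂ) + 1)‖ +
          ‖x 0‖ * (1 / ((k : ℝ) + 1) - 1 / ((k : ℝ) + 2)) := by
      intro k
      have hk1 : ((k : ℂ) + 1) ≠ 0 := by
        intro h
        have h2 := norm_cast_add_one k
        rw [h, norm_zero] at h2
        nlinarith [Nat.cast_nonneg (α := ℝ) k]
      have hk2 : ((k : ℂ) + 2) ≠ 0 := by
        intro h
        have h2 := norm_cast_add_two k
        rw [h, norm_zero] at h2
        nlinarith [Nat.cast_nonneg (α := ℝ) k]
      set u : ℂ := l / ((k : ℂ) + 2) - 1 / ((k : ℂ) + 1) with hu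
      have heq : x (k + 1) / ((k : ℂ) + 2) - x k / ((k : ℂ) + 1) = x 0 * l ^ k * u := by
        rw [hgeom (k + 1), hgeom k, hu]
        field_simp
        ring
      have hnorm : ‖x (k + 1) / ((k : ℂ) + 2) - x k / ((k : ℂ) + 1)‖
          = ‖x 0‖ * ‖l‖ ^ k * ‖u‖ := by
        rw [heq, norm_mul, norm_mul, norm_pow]
      have hdiff : ‖(1 : ℂ) / ((k : ℂ) + 1) - 1 / ((k : ℂ) + 2)‖
          = 1 / ((k : ℝ) + 1) - 1 / ((k : ℝ) + 2) := by
        have h : (1 : ℂ) / ((k : ℂ) + 1) - 1 / ((k : ℂ) + 2)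
            = (((1 / ((k : ℝ) + 1) - 1 / ((k : ℝ) + 2)) : ℝ) : ℂ) := by
          push_cast; ring
        rw [h, Complex.norm_real, Real.norm_eq_abs, abs_of_nonneg]
        have : 1 / ((k : ℝ) + 2) ≤ 1 / ((k : ℝ) + 1) := by
          apply one_div_le_one_div_of_le <;> nlinarith [Nat.cast_nonneg (α := ℝ) k]
        linarith
      have hsplit : (l - 1) / ((k : ℂ) + 2)
          = u + ((1 : ℂ) / ((k : ℂ) + 1) - 1 / ((k : ℂ) + 2)) := by
        rw [hu]; field_simp; ring
      have hle : ‖l - 1‖ / ((k : ℝ) + 2)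
          ≤ ‖u‖ + (1 / ((k : ℝ) + 1) - 1 / ((k : ℝ) + 2)) := by
        have := norm_add_le u ((1 : ℂ) / ((k : ℂ) + 1) - 1 / ((k : ℂ) + 2))
        rw [← hsplit, hdiff] at this
        rwa [norm_div, norm_cast_add_two] at this
      have hpow : (1 : ℝ) ≤ ‖l‖ ^ k := one_le_pow₀ hl
      have hux : ‖x 0‖ * ‖u‖ ≤ ‖x 0‖ * ‖l‖ ^ k * ‖u‖ := by
        nlinarith [mul_le_mul_of_nonneg_left hpow
          (mul_nonneg (norm_nonneg (x 0)) (norm_nonneg u))]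
      rw [hnorm]
      have hx0n : (0 : ℝ) ≤ ‖x 0‖ := norm_nonneg _
      calc ‖x 0‖ * ‖l - 1‖ * (1 / ((k : ℝ) + 2))
          = ‖x 0‖ * (‖l - 1‖ / ((k : ℝ) + 2)) := by ring
        _ ≤ ‖x 0‖ * (‖u‖ + (1 / ((k : ℝ) + 1) - 1 / ((k : ℝ) + 2))) :=
            mul_le_mul_of_nonneg_left hle hx0n
        _ = ‖x 0‖ * ‖u‖ + ‖x 0‖ * (1 / ((k : ℝ) + 1) - 1 / ((k : ℝ) + 2)) := by ring
        _ ≤ ‖x 0‖ * ‖l‖ ^ k * ‖u‖ + ‖x 0‖ * (1 / ((k : ℝ) + 1) - 1 / ((k : ℝ) + 2)) := by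
            linarith
    -- the RHS is summable
    have htel : Summable (fun k : ℕ => ‖x 0‖ * (1 / ((k : ℝ) + 1) - 1 / ((k : ℝ) + 2))) := by
      apply Summable.mul_left
      apply Summable.of_nonneg_of_le _ _ summable_one_div_sq
      · intro k
        have : 1 / ((k : ℝ) + 2) ≤ 1 / ((k : ℝ) + 1) := by
          apply one_div_le_one_div_of_le <;> nlinarith [Nat.cast_nonneg (α := ℝ) k]
        linarith
      · intro k
        have h0 : (0 : ℝ) < (k : ℝ) + 1 := by positivity
        have h2 : (0 : ℝ) < (k : ℝ) + 2 := by positivity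
        rw [div_sub_div _ _ (ne_of_gt h0) (ne_of_gt h2)]
        rw [div_le_div_iff₀ (by positivity) (by positivity)]
        nlinarith [Nat.cast_nonneg (α := ℝ) k]
    have hRHS := hsum.add htel
    have hLHS : Summable (fun k : ℕ => ‖x 0‖ * ‖l - 1‖ * (1 / ((k : ℝ) + 2))) :=
      Summable.of_nonneg_of_le (fun k => by positivity) key hRHS
    exact not_summable_shift ((summable_mul_left_iff hc).mp hLHS)
  · rintro (hl | rfl)
    · -- |l| < 1 : take x k = l ^ k
      refine ⟨fun k => l ^ k, ⟨?_, ?_⟩, ?_, ?_⟩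
      · apply Summable.of_nonneg_of_le (fun k => norm_nonneg _) _
          ((summable_geometric_of_lt_one (norm_nonneg l) hl).mul_left 2)
        intro k
        have hk : (0 : ℝ) ≤ (k : ℝ) := Nat.cast_nonneg k
        have hpow : ‖l‖ ^ (k + 1) ≤ ‖l‖ ^ k :=
          pow_le_pow_of_le_one (norm_nonneg l) hl.le (by omega)
        have hpk : (0 : ℝ) ≤ ‖l‖ ^ k := by positivity
        have hA : ‖l ^ (k + 1) / ((k : ℂ) + 2)‖ ≤ ‖l‖ ^ k := by
          rw [norm_div, norm_pow, norm_cast_add_two]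
          rw [div_le_iff₀ (by positivity)]
          nlinarith
        have hB : ‖l ^ k / ((k : ℂ) + 1)‖ ≤ ‖l‖ ^ k := by
          rw [norm_div, norm_pow, norm_cast_add_one]
          rw [div_le_iff₀ (by positivity)]
          nlinarith
        calc ‖l ^ (k + 1) / ((k : ℂ) + 2) - l ^ k / ((k : ℂ) + 1)‖
            ≤ ‖l ^ (k + 1) / ((k : ℂ) + 2)‖ + ‖l ^ k / ((k : ℂ) + 1)‖ := norm_sub_le _ _
          _ ≤ 2 * ‖l‖ ^ k := by linarith
      · apply squeeze_zero_norm (a := fun k : ℕ => ‖l‖ ^ k) _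
          (tendsto_pow_atTop_nhds_zero_of_lt_one (norm_nonneg l) hl)
        intro k
        rw [norm_div, norm_pow, norm_cast_add_one]
        have : (1 : ℝ) ≤ (k : ℝ) + 1 := by nlinarith [Nat.cast_nonneg (α := ℝ) k]
        exact div_le_self (by positivity) this
      · intro h
        have := congrFun h 0
        simp at this
      · intro k; show l ^ (k + 1) = l * l ^ k; rw [pow_succ]; ring
    · -- l = 1 : take x k = 1
      refine ⟨fun _ => 1, ⟨?_, ?_⟩, ?_, ?_⟩
      · apply Summable.of_nonneg_of_le (fun k => norm_nonneg _) _ summable_one_div_sq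
        intro k
        have h : (1 : ℂ) / ((k : ℂ) + 2) - 1 / ((k : ℂ) + 1)
            = (((1 / ((k : ℝ) + 2) - 1 / ((k : ℝ) + 1)) : ℝ) : ℂ) := by push_cast; ring
        rw [h, Complex.norm_real, Real.norm_eq_abs, abs_sub_comm, abs_of_nonneg]
        · have h0 : (0 : ℝ) < (k : ℝ) + 1 := by positivity
          have h2 : (0 : ℝ) < (k : ℝ) + 2 := by positivity
          rw [div_sub_div _ _ (ne_of_gt h0) (ne_of_gt h2)]
          rw [div_le_div_iff₀ (by positivity) (by positivity)]
          nlinarith [Nat.cast_nonneg (α := ℝ) k]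
        · have : 1 / ((k : ℝ) + 2) ≤ 1 / ((k : ℝ) + 1) := by
            apply one_div_le_one_div_of_le <;> nlinarith [Nat.cast_nonneg (α := ℝ) k]
          linarith
      · apply squeeze_zero_norm (a := fun k : ℕ => 1 / ((k : ℝ) + 1)) _
          tendsto_one_div_add_atTop_nhds_zero_nat
        intro k
        rw [norm_div, norm_one, norm_cast_add_one]
      · intro h
        have := congrFun h 0
        simp at this
      · intro k; rw [one_mul]
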